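/- Under the Cartan multiplication rules for the algebra A_n^m, if the indices u_s appearing in rule 3 are pairwise distinct for s = m+1,...,n, and the full associativity conditions (A1) and (A2) hold, then I_s I_p = 0 for all s,p ∈ [m+1,n]. -/

import Mathlib

/-- Under the Cartan multiplication rules, if the indices `u s` of
rule 3 are pairwise distinct and the associativity conditions (A1) and (A2)
hold, then the product of any two nilpotent basis vectors vanishes. -/
theorem proposition2 {n m : ℕ} (A : Type*) [NonUnitalNonAssocCommRing A]
    [Module ℂ A] [SMulCommClass ℂ A A] [IsScalarTower ℂ A A]
    (I : Module.Basis (Fin n) ℂ A)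
    (h1 : ∀ r s : Fin n, (r : ℕ) < m → (s : ℕ) < m →
      I r * I s = if r = s then I r else 0)
    (h2 : ∀ r s : Fin n, m ≤ (r : ℕ) → m ≤ (s : ℕ) →
      I r * I s ∈ Submodule.span ℂ {x : A | ∃ p : Fin n, max r s < p ∧ x = I p})
    (u : Fin n → Fin n)
    (h3 : ∀ s : Fin n, m ≤ (s : ℕ) → (u s : ℕ) < m ∧ I (u s) * I s = I s ∧
      ∀ r : Fin n, (r : ℕ) < m → r ≠ u s → I r * I s = 0)
    (hdist : ∀ s p : Fin n, m ≤ (s : ℕ) → m ≤ (p : ℕ) → s ≠ p → u s ≠ u p)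
    (hA1 : ∀ r s p : Fin n, m ≤ (r : ℕ) → m ≤ (s : ℕ) → m ≤ (p : ℕ) →
      (I r * I s) * I p = I r * (I s * I p))
    (hA2 : ∀ v s p : Fin n, (v : ℕ) < m → m ≤ (s : ℕ) → m ≤ (p : ℕ) →
      (I v * I s) * I p = I v * (I s * I p)) :
    ∀ s p : Fin n, m ≤ (s : ℕ) → m ≤ (p : ℕ) → I s * I p = 0 := by
  intro s p hs hp
  obtain ⟨hus, husm, -⟩ := h3 s hs
  have hx := h2 s p hs hp
  have hker : Submodule.span ℂ {x : A | ∃ q : Fin n, max s p < q ∧ x = I q} ≤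
      LinearMap.ker (LinearMap.mulLeft ℂ (I (u s))) := by
    rw [Submodule.span_le]
    rintro x ⟨q, hq, rfl⟩
    have hsq : s < q := lt_of_le_of_lt (le_max_left s p) hq
    have hqm : m ≤ (q : ℕ) := le_trans hs (le_of_lt hsq)
    have hne : u s ≠ u q := hdist s q hs hqm (ne_of_lt hsq)
    have h0 : I (u s) * I q = 0 := (h3 q hqm).2.2 (u s) hus hne
    simpa [LinearMap.mem_ker] using h0
  have h0 : I (u s) * (I s * I p) = 0 := by
    have := hker hx
    simpa [LinearMap.mem_ker] using this
  calc I s * I p = (I (u s) * I s) * I p := by rw [husm]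
    _ = I (u s) * (I s * I p) := hA2 (u s) s p hus hs hp
    _ = 0 := h0
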